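/- Let n ≥ 2 and 1 ≤ k ≤ n, and let S ⊆ [k] with #S odd. Then: (i) for every T ⊆ [n] with T ∉ {∅, S}, the number of faces A ∈ 𝕋̄_n^k with #(A ∩ S) even and #(A ∩ T) odd equals 2^(n−2); equivalently c^S · d^T = 2^(n−2); and (ii) c^S · d^∅ = c^S · d^S = 0. In particular, the inequality c^S · x ≤ 2^(n−2) is valid on GCut(𝕋_n^k). -/

import Mathlib

open Finset

variable {n : ℕ}

def tog (v : Fin n) (A : Finset (Fin n)) : Finset (Fin n) :=
  if v ∈ A then A.erase v else insert v A

lemma tog_tog (v : Fin n) (A : Finset (Fin n)) : tog v (tog v A) = A := by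
  unfold tog
  by_cases h : v ∈ A
  · simp [h, Finset.insert_erase h]
  · simp [h]

lemma tog_inter_of_not_mem {v : Fin n} {X : Finset (Fin n)} (h : v ∉ X) (A : Finset (Fin n)) :
    tog v A ∩ X = A ∩ X := by
  unfold tog
  by_cases hA : v ∈ A
  · rw [if_pos hA, Finset.erase_inter, Finset.erase_eq_of_notMem (by simp [h])]
  · rw [if_neg hA, Finset.insert_inter_of_notMem h]

lemma odd_tog {v : Fin n} {X : Finset (Fin n)} (h : v ∈ X) (A : Finset (Fin n)) :
    Odd ((tog v A ∩ X).card) ↔ Even ((A ∩ X).card) := by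
  unfold tog
  by_cases hA : v ∈ A
  · rw [if_pos hA, Finset.erase_inter]
    have hv : v ∈ A ∩ X := Finset.mem_inter.mpr ⟨hA, h⟩
    have hc : ((A ∩ X).erase v).card + 1 = (A ∩ X).card := by
      rw [Finset.card_erase_of_mem hv]
      have := Finset.card_pos.mpr ⟨v, hv⟩
      omega
    rw [← hc, Nat.even_add_one, Nat.not_even_iff_odd]
  · rw [if_neg hA, Finset.insert_inter_of_mem h,
      Finset.card_insert_of_notMem (fun hc => hA (Finset.mem_inter.mp hc).1),
      Nat.odd_add_one, Nat.not_odd_iff_even]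

lemma even_tog {v : Fin n} {X : Finset (Fin n)} (h : v ∈ X) (A : Finset (Fin n)) :
    Even ((tog v A ∩ X).card) ↔ Odd ((A ∩ X).card) := by
  rw [← Nat.not_odd_iff_even, odd_tog h A, Nat.not_even_iff_odd]

lemma card_filter_tog (v : Fin n) (P Q : Finset (Fin n) → Prop) [DecidablePred P] [DecidablePred Q]
    (h : ∀ A, P A ↔ Q (tog v A)) :
    (univ.filter P).card = (univ.filter Q).card := by
  apply Finset.card_bij' (fun A _ => tog v A) (fun A _ => tog v A)
  · intro A hA
    simp only [Finset.mem_filter, Finset.mem_univ, true_and] at hA ⊢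
    exact (h A).mp hA
  · intro A hA
    simp only [Finset.mem_filter, Finset.mem_univ, true_and] at hA ⊢
    rw [h (tog v A), tog_tog]; exact hA
  · intro A _; exact tog_tog v A
  · intro A _; exact tog_tog v A

lemma card_filter_odd (hn : 1 ≤ n) {Y : Finset (Fin n)} (hY : Y.Nonempty) :
    (univ.filter fun A : Finset (Fin n) => Odd ((A ∩ Y).card)).card = 2 ^ (n - 1) := by
  obtain ⟨v, hv⟩ := hY
  have h1 : (univ.filter fun A : Finset (Fin n) => Odd ((A ∩ Y).card)).card
      = (univ.filter fun A : Finset (Fin n) => ¬ Odd ((A ∩ Y).card)).card := by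
    apply card_filter_tog v
    intro A
    rw [Nat.not_odd_iff_even, ← odd_tog hv (tog v A), tog_tog]
  have h2 := Finset.card_filter_add_card_filter_not
    (s := (univ : Finset (Finset (Fin n)))) (fun A => Odd ((A ∩ Y).card))
  rw [Finset.card_univ, Fintype.card_finset, Fintype.card_fin] at h2
  have h3 : 2 ^ n = 2 * 2 ^ (n - 1) := by
    rw [← pow_succ']
    congr 1
    omega
  omega

lemma card_filter_even (hn : 1 ≤ n) {Y : Finset (Fin n)} (hY : Y.Nonempty) :
    (univ.filter fun A : Finset (Fin n) => Even ((A ∩ Y).card)).card = 2 ^ (n - 1) := by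
  have h2 := Finset.card_filter_add_card_filter_not
    (s := (univ : Finset (Finset (Fin n)))) (fun A => Odd ((A ∩ Y).card))
  rw [Finset.card_univ, Fintype.card_finset, Fintype.card_fin, card_filter_odd hn hY] at h2
  have : (univ.filter fun A : Finset (Fin n) => ¬ Odd ((A ∩ Y).card))
      = (univ.filter fun A : Finset (Fin n) => Even ((A ∩ Y).card)) := by
    simp [Nat.not_odd_iff_even]
  rw [this] at h2
  have h3 : 2 ^ n = 2 * 2 ^ (n - 1) := by
    rw [← pow_succ']
    congr 1
    omega
  omega

lemma count_main (hn : 2 ≤ n) {S T : Finset (Fin n)} (hSne : S.Nonempty)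
    (hTne : T.Nonempty) (hTS : T ≠ S) :
    (univ.filter fun A : Finset (Fin n) =>
      Even ((A ∩ S).card) ∧ Odd ((A ∩ T).card)).card = 2 ^ (n - 2) := by
  have h3 : 2 ^ (n-1) = 2 * 2 ^ (n - 2) := by
    rw [← pow_succ']; congr 1; omega
  by_cases hcase : (T \ S).Nonempty
  · obtain ⟨t, ht⟩ := hcase
    have htT : t ∈ T := (Finset.mem_sdiff.mp ht).1
    have htS : t ∉ S := (Finset.mem_sdiff.mp ht).2
    have heq : (univ.filter fun A : Finset (Fin n) =>
        Even ((A ∩ S).card) ∧ Odd ((A ∩ T).card)).card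
        = (univ.filter fun A : Finset (Fin n) =>
        Even ((A ∩ S).card) ∧ ¬ Odd ((A ∩ T).card)).card := by
      apply card_filter_tog t
      intro A
      rw [Nat.not_odd_iff_even, tog_inter_of_not_mem htS, even_tog htT]
    have hsplit := Finset.card_filter_add_card_filter_not
      (s := univ.filter fun A : Finset (Fin n) => Even ((A ∩ S).card))
      (fun A => Odd ((A ∩ T).card))
    rw [Finset.filter_filter, Finset.filter_filter] at hsplit
    rw [card_filter_even (by omega) hSne] at hsplit
    omega
  · have hTsub : T ⊆ S := by
      rw [Finset.not_nonempty_iff_eq_empty, Finset.sdiff_eq_empty_iff_subset] at hcase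
      exact hcase
    have hSs : (S \ T).Nonempty := by
      rw [Finset.sdiff_nonempty]
      intro hsub
      exact hTS (Finset.Subset.antisymm hTsub hsub)
    obtain ⟨s, hs⟩ := hSs
    have hsS : s ∈ S := (Finset.mem_sdiff.mp hs).1
    have hsT : s ∉ T := (Finset.mem_sdiff.mp hs).2
    have heq : (univ.filter fun A : Finset (Fin n) =>
        Odd ((A ∩ T).card) ∧ Even ((A ∩ S).card)).card
        = (univ.filter fun A : Finset (Fin n) =>
        Odd ((A ∩ T).card) ∧ ¬ Even ((A ∩ S).card)).card := by
      apply card_filter_tog s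
      intro A
      rw [Nat.not_even_iff_odd, tog_inter_of_not_mem hsT, odd_tog hsS]
    have hsplit := Finset.card_filter_add_card_filter_not
      (s := univ.filter fun A : Finset (Fin n) => Odd ((A ∩ T).card))
      (fun A => Even ((A ∩ S).card))
    rw [Finset.filter_filter, Finset.filter_filter, card_filter_odd (by omega) hTne] at hsplit
    have hcomm : (univ.filter fun A : Finset (Fin n) =>
        Even ((A ∩ S).card) ∧ Odd ((A ∩ T).card))
        = (univ.filter fun A : Finset (Fin n) =>
        Odd ((A ∩ T).card) ∧ Even ((A ∩ S).card)) := by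
      apply Finset.filter_congr; intro A _; rw [and_comm]
    rw [hcomm]
    omega
/-- The nonempty faces of the turtle complex `𝕋_n^k`. -/
abbrev TFace (n k : ℕ) : Type :=
  {F : Finset (Fin n) // F.Nonempty ∧ ∃ i : Fin n, i.val < k ∧ i ∉ F}

/-- The vertex `d^S` of `GCut(𝕋_n^k)`. -/
noncomputable def dvecT (n k : ℕ) (S : Finset (Fin n)) : TFace n k → ℝ :=
  fun F => if Odd ((F.val ∩ S).card) then 1 else 0

/-- The linear functional `c^S`: `c^S_F = 0` if `#(S ∩ F)` is odd, `1` if even. -/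
noncomputable def cvecT (n k : ℕ) (S : Finset (Fin n)) : TFace n k → ℝ :=
  fun F => if Odd ((S ∩ F.val).card) then 0 else 1


lemma count_faces (n k : ℕ) (hn : 2 ≤ n) (S : Finset (Fin n))
    (hS : ∀ i ∈ S, i.val < k) (hSodd : Odd S.card) (T : Finset (Fin n))
    (hT0 : T ≠ ∅) (hTS : T ≠ S) :
    (Finset.univ.filter (fun F : TFace n k =>
        Even ((F.val ∩ S).card) ∧ Odd ((F.val ∩ T).card))).card = 2 ^ (n - 2) := by
  have hface : ∀ A : Finset (Fin n), Even ((A ∩ S).card) → Odd ((A ∩ T).card) →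
      A.Nonempty ∧ ∃ i : Fin n, i.val < k ∧ i ∉ A := by
    intro A hE hO
    constructor
    · have : (A ∩ T).Nonempty := by
        rw [← Finset.card_pos]
        rcases hO with ⟨m, hm⟩
        omega
      obtain ⟨x, hx⟩ := this
      exact ⟨x, (Finset.mem_inter.mp hx).1⟩
    · by_contra hc
      push_neg at hc
      have hsub : S ⊆ A := fun s hs => hc s (hS s hs)
      rw [Finset.inter_eq_right.mpr hsub] at hE
      exact (Nat.not_odd_iff_even.mpr hE) hSodd
  have hbij : (Finset.univ.filter (fun F : TFace n k =>
      Even ((F.val ∩ S).card) ∧ Odd ((F.val ∩ T).card))).card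
      = (univ.filter fun A : Finset (Fin n) =>
        Even ((A ∩ S).card) ∧ Odd ((A ∩ T).card)).card := by
    apply Finset.card_bij (fun F _ => F.val)
    · intro F hF
      simp only [Finset.mem_filter, Finset.mem_univ, true_and] at hF ⊢
      exact hF
    · intro F _ G _ h
      exact Subtype.ext h
    · intro A hA
      simp only [Finset.mem_filter, Finset.mem_univ, true_and] at hA
      exact ⟨⟨A, hface A hA.1 hA.2⟩, by simp [hA], rfl⟩
  rw [hbij]
  have hSne : S.Nonempty := by
    rw [← Finset.card_pos]
    rcases hSodd with ⟨m, hm⟩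
    omega
  have hTne : T.Nonempty := Finset.nonempty_iff_ne_empty.mpr hT0
  exact count_main hn hSne hTne hTS


/-- for `S ⊆ [k]` with `#S` odd: (i) for every `T ∉ {∅, S}` the number
of faces `F ∈ 𝕋̄_n^k` with `#(F ∩ S)` even and `#(F ∩ T)` odd equals `2^(n−2)`,
equivalently `c^S · d^T = 2^(n−2)`; (ii) `c^S · d^∅ = c^S · d^S = 0`; in particular
`c^S · x ≤ 2^(n−2)` is valid on `GCut(𝕋_n^k)`. -/
theorem stmt_10 (n k : ℕ) (hn : 2 ≤ n) (hk1 : 1 ≤ k) (hkn : k ≤ n)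
    (S : Finset (Fin n)) (hS : ∀ i ∈ S, i.val < k) (hSodd : Odd S.card) :
    (∀ T : Finset (Fin n), T ≠ ∅ → T ≠ S →
      (Finset.univ.filter (fun F : TFace n k =>
          Even ((F.val ∩ S).card) ∧ Odd ((F.val ∩ T).card))).card = 2 ^ (n - 2)) ∧
    (∀ T : Finset (Fin n), T ≠ ∅ → T ≠ S →
      ∑ F : TFace n k, cvecT n k S F * dvecT n k T F = 2 ^ (n - 2)) ∧
    (∑ F : TFace n k, cvecT n k S F * dvecT n k ∅ F = 0) ∧
    (∑ F : TFace n k, cvecT n k S F * dvecT n k S F = 0) ∧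
    (∀ x ∈ convexHull ℝ (Set.range (dvecT n k)),
      ∑ F : TFace n k, cvecT n k S F * x F ≤ 2 ^ (n - 2)) := by
  have key : ∀ T : Finset (Fin n), T ≠ ∅ → T ≠ S →
      (Finset.univ.filter (fun F : TFace n k =>
        Even ((F.val ∩ S).card) ∧ Odd ((F.val ∩ T).card))).card = 2 ^ (n - 2) :=
    fun T hT0 hTS => count_faces n k hn S hS hSodd T hT0 hTS
  have keysum : ∀ T : Finset (Fin n), T ≠ ∅ → T ≠ S →
      ∑ F : TFace n k, cvecT n k S F * dvecT n k T F = 2 ^ (n - 2) := by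
    intro T hT0 hTS
    have hterm : ∀ F : TFace n k, cvecT n k S F * dvecT n k T F =
        if (Even ((F.val ∩ S).card) ∧ Odd ((F.val ∩ T).card)) then (1:ℝ) else 0 := by
      intro F
      unfold cvecT dvecT
      rw [Finset.inter_comm S F.val]
      by_cases h1 : Odd ((F.val ∩ S).card) <;> by_cases h2 : Odd ((F.val ∩ T).card) <;>
        simp [h1, h2, ← Nat.not_odd_iff_even]
    rw [Finset.sum_congr rfl (fun F _ => hterm F), Finset.sum_boole, key T hT0 hTS]
    push_cast
    ring
  have h0 : ∑ F : TFace n k, cvecT n k S F * dvecT n k ∅ F = 0 := by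
    apply Finset.sum_eq_zero
    intro F _
    simp [dvecT]
  have hSS : ∑ F : TFace n k, cvecT n k S F * dvecT n k S F = 0 := by
    apply Finset.sum_eq_zero
    intro F _
    unfold cvecT dvecT
    rw [Finset.inter_comm S F.val]
    by_cases h1 : Odd ((F.val ∩ S).card) <;> simp [h1]
  refine ⟨key, keysum, h0, hSS, ?_⟩
  intro x hx
  have hlin : IsLinearMap ℝ (fun x : TFace n k → ℝ => ∑ F : TFace n k, cvecT n k S F * x F) := by
    constructor
    · intro a b
      simp [mul_add, Finset.sum_add_distrib]
    · intro c a
      simp only [Pi.smul_apply, smul_eq_mul, Finset.mul_sum]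
      apply Finset.sum_congr rfl
      intros
      ring
  have hpos : (0:ℝ) ≤ 2 ^ (n - 2) := by positivity
  have hsub : Set.range (dvecT n k) ⊆
      {w : TFace n k → ℝ | ∑ F : TFace n k, cvecT n k S F * w F ≤ 2 ^ (n - 2)} := by
    rintro _ ⟨T, rfl⟩
    by_cases hT0 : T = ∅
    · subst hT0
      simp only [Set.mem_setOf_eq, h0]
      exact hpos
    · by_cases hTS : T = S
      · subst hTS
        simp only [Set.mem_setOf_eq, hSS]
        exact hpos
      · simp only [Set.mem_setOf_eq, keysum T hT0 hTS]
        exact le_refl _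
  exact convexHull_min hsub (convex_halfSpace_le hlin _) hx
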